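/- For any n×n matrix L whose rows and columns each sum to zero (not necessarily symmetric), and i < j, the cofactor C_{11}(L) satisfies: the derivative d/dt C_{11}(L + t E_{ij})|_{t=0} = −C_{11}(L'), where E_{ij} has entries +1 at (i,j),(j,i), −1 at (i,i),(j,j), 0 elsewhere, and L' = M_{jj}(L_+) with L_+ obtained from L by adding row j to row i and column j to column i. -/

import Mathlib

open Matrix


/-- The matrix `E_{ij}`: `+1` at entries `(i,j)` and `(j,i)`, `-1` at
entries `(i,i)` and `(j,j)`, `0` elsewhere. -/
def tangentE {n : ℕ} (i j : Fin n) : Matrix (Fin n) (Fin n) ℝ :=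
  Matrix.of fun a b =>
    (if a = i ∧ b = j then (1 : ℝ) else 0) + (if a = j ∧ b = i then 1 else 0) -
      (if a = i ∧ b = i then 1 else 0) - (if a = j ∧ b = j then 1 else 0)

/-- `L₊`: the matrix obtained from `L` by adding row `j` to row `i` and then
column `j` to column `i`. -/
def addRowCol {n : ℕ} (L : Matrix (Fin n) (Fin n) ℝ) (i j : Fin n) :
    Matrix (Fin n) (Fin n) ℝ :=
  Matrix.of fun a b =>
    L a b + (if a = i then L j b else 0) +
      (if b = i then L a j + (if a = i then L j j else 0) else 0)

/-- The leading principal cofactor `C_{11}(L) = det(M_{11}(L))` (indices are `0`-based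
in Lean, so this deletes the first row and first column). -/
noncomputable def leadCofactor {n : ℕ} (L : Matrix (Fin (n + 1)) (Fin (n + 1)) ℝ) : ℝ :=
  (L.submatrix (Fin.succAbove 0) (Fin.succAbove 0)).det

lemma diag_minor_eq {m : ℕ} (X : Matrix (Fin (m + 1)) (Fin (m + 1)) ℝ)
    (hrow : ∀ r, ∑ c, X r c = 0) (hcol : ∀ c, ∑ r, X r c = 0) (a b : Fin (m + 1)) :
    (X.submatrix a.succAbove a.succAbove).det = (X.submatrix b.succAbove b.succAbove).det := by
  have h1 := Matrix.submatrix_succAbove_det_eq_negOnePow_submatrix_succAbove_det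
      (X.submatrix id a.succAbove) (by ext c; exact (Finset.sum_apply (M := fun _ : Fin m => ℝ) c _ _).trans (by simpa using hcol (a.succAbove c))) a b
  have h2 := Matrix.submatrix_succAbove_det_eq_negOnePow_submatrix_succAbove_det'
      (X.submatrix b.succAbove id) (fun r => by simpa using hrow (b.succAbove r)) a b
  simp only [Matrix.submatrix_submatrix, Function.comp_id, Function.id_comp] at h1 h2
  rw [h1, h2, smul_smul, Int.units_mul_self, one_smul]

lemma det_updateRow_single' {m : ℕ} (A : Matrix (Fin (m + 1)) (Fin (m + 1)) ℝ)
    (a b : Fin (m + 1)) :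
    (A.updateRow a (Pi.single b 1)).det =
      (-1) ^ ((a : ℕ) + (b : ℕ)) * (A.submatrix a.succAbove b.succAbove).det := by
  rw [Matrix.det_succ_row _ a, Finset.sum_eq_single b]
  · have hsub : (A.updateRow a (Pi.single b 1)).submatrix a.succAbove b.succAbove
        = A.submatrix a.succAbove b.succAbove := by
      ext x y
      simp [Matrix.updateRow_ne (Fin.succAbove_ne a x)]
    simp [hsub]
  · intro c _ hc
    simp [Pi.single_eq_of_ne hc]
  · simp

lemma tangentE_row_sum {n : ℕ} (i j : Fin n) (a : Fin n) : ∑ b, tangentE i j a b = 0 := by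
  by_cases hij0 : i = j
  · subst hij0; simp [tangentE]
  · have hji0 : ¬ j = i := fun h => hij0 h.symm
    by_cases hai : a = i <;> by_cases haj : a = j <;>
      simp [tangentE, hai, haj, hij0, hji0, Finset.sum_sub_distrib, Finset.sum_add_distrib,
        Finset.sum_ite_eq, Finset.sum_ite_eq']

lemma tangentE_col_sum {n : ℕ} (i j : Fin n) (b : Fin n) : ∑ a, tangentE i j a b = 0 := by
  by_cases hij0 : i = j
  · subst hij0; simp [tangentE]
  · have hji0 : ¬ j = i := fun h => hij0 h.symm
    by_cases hbi : b = i <;> by_cases hbj : b = j <;>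
      simp [tangentE, hbi, hbj, hij0, hji0, Finset.sum_sub_distrib, Finset.sum_add_distrib,
        Finset.sum_ite_eq, Finset.sum_ite_eq']


/-- for any `L` (not necessarily symmetric) whose rows and columns all sum
to zero and `i < j`, one has `d/dt C_{11}(L + t E_{ij})|₀ = -C_{11}(L')` with
`L' = M_{jj}(L₊)`. -/
theorem leadCofactor_directional_derivative {n : ℕ}
    (L : Matrix (Fin (n + 2)) (Fin (n + 2)) ℝ)
    (hrow : ∀ i, ∑ j, L i j = 0) (hcol : ∀ j, ∑ i, L i j = 0)
    (i j : Fin (n + 2)) (hij : i < j) :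
    deriv (fun t : ℝ => leadCofactor (L + t • tangentE i j)) 0 =
      -leadCofactor ((addRowCol L i j).submatrix j.succAbove j.succAbove) := by
  have hij' : i ≠ j := ne_of_lt hij
  have hji' : ¬ (j = i) := fun h => hij' h.symm
  have hi_lt : (i : ℕ) < n + 1 := lt_of_lt_of_le hij (Nat.lt_succ_iff.mp j.isLt)
  set p : Fin (n + 1) := ⟨i, hi_lt⟩ with hp
  have hip : j.succAbove p = i := by
    have hcs : p.castSucc < j := by
      rw [Fin.lt_def, Fin.coe_castSucc]
      exact Fin.lt_def.mp hij
    rw [Fin.succAbove_of_castSucc_lt j p hcs]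
    ext; simp [p]
  have hiff : ∀ x : Fin (n + 1), j.succAbove x = i ↔ x = p := by
    intro x; rw [← hip, Fin.succAbove_right_inj]
  set Lsub := L.submatrix j.succAbove j.succAbove with hLsub
  set e := (Lsub.submatrix p.succAbove p.succAbove).det with he
  have key : ∀ t : ℝ, leadCofactor (L + t • tangentE i j) = Lsub.det - t * e := by
    intro t
    have hrow_t : ∀ r, ∑ c, (L + t • tangentE i j) r c = 0 := by
      intro r
      simp [Matrix.add_apply, Matrix.smul_apply, Finset.sum_add_distrib,
        ← Finset.mul_sum, hrow r, tangentE_row_sum i j r]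
    have hcol_t : ∀ c, ∑ r, (L + t • tangentE i j) r c = 0 := by
      intro c
      simp [Matrix.add_apply, Matrix.smul_apply, Finset.sum_add_distrib,
        ← Finset.mul_sum, hcol c, tangentE_col_sum i j c]
    have step1 : leadCofactor (L + t • tangentE i j)
        = (((L + t • tangentE i j)).submatrix j.succAbove j.succAbove).det :=
      diag_minor_eq _ hrow_t hcol_t 0 j
    have step2 : ((L + t • tangentE i j)).submatrix j.succAbove j.succAbove
        = Lsub.updateRow p (Lsub p + (-t) • (Pi.single p 1 : Fin (n + 1) → ℝ)) := by
      ext x y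
      have hEx : tangentE i j (j.succAbove x) (j.succAbove y)
          = -(if x = p ∧ y = p then (1:ℝ) else 0) := by
        simp [tangentE, hiff, Fin.succAbove_ne j x, Fin.succAbove_ne j y]
      by_cases hx : x = p
      · subst hx
        simp only [Matrix.submatrix_apply, Matrix.add_apply, Matrix.smul_apply,
          Matrix.updateRow_self, Pi.add_apply, Pi.smul_apply, Pi.single_apply, hLsub,
          hEx, smul_eq_mul]
        by_cases hy : y = p <;> simp [hy] <;> ring
      · simp only [Matrix.submatrix_apply, Matrix.add_apply, Matrix.smul_apply,
          Matrix.updateRow_ne hx, hEx, hx, false_and, if_false, smul_eq_mul, mul_zero,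
          mul_neg, neg_zero, add_zero, hLsub]
    rw [step1, step2, Matrix.det_updateRow_add, Matrix.det_updateRow_smul,
      Matrix.updateRow_eq_self, det_updateRow_single']
    have hpow : ((-1 : ℝ)) ^ ((p : ℕ) + (p : ℕ)) = 1 := Even.neg_one_pow ⟨p, rfl⟩
    rw [hpow, ← he]; ring
  have hderiv : deriv (fun t : ℝ => leadCofactor (L + t • tangentE i j)) 0 = -e := by
    have hfun : (fun t : ℝ => leadCofactor (L + t • tangentE i j))
        = fun t : ℝ => Lsub.det - t * e := funext key
    rw [hfun]
    simpa using (((hasDerivAt_id (0:ℝ)).mul_const e).const_sub Lsub.det).deriv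
  rw [hderiv]
  congr 1
  set L' := (addRowCol L i j).submatrix j.succAbove j.succAbove with hL'
  have hsum_row : ∀ a : Fin (n + 1), ∑ b, L' a b = 0 := by
    intro a
    have htot : ∑ c, addRowCol L i j (j.succAbove a) c
        = addRowCol L i j (j.succAbove a) j := by
      by_cases hr : j.succAbove a = i <;>
        simp [addRowCol, hr, Finset.sum_add_distrib, hrow, hji', Finset.sum_ite_eq',
          Finset.sum_ite_eq]
    have h := Fin.sum_univ_succAbove (fun c => addRowCol L i j (j.succAbove a) c) j
    rw [htot] at h
    simp only [hL', Matrix.submatrix_apply]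
    linarith [h]
  have hsum_col : ∀ b : Fin (n + 1), ∑ a, L' a b = 0 := by
    intro b
    have htot : ∑ r, addRowCol L i j r (j.succAbove b)
        = addRowCol L i j j (j.succAbove b) := by
      by_cases hc : j.succAbove b = i <;>
        simp [addRowCol, hc, Finset.sum_add_distrib, hcol, hji', Finset.sum_ite_eq',
          Finset.sum_ite_eq]
    have h := Fin.sum_univ_succAbove (fun r => addRowCol L i j r (j.succAbove b)) j
    rw [htot] at h
    simp only [hL', Matrix.submatrix_apply]
    linarith [h]
  have hfinal : L'.submatrix p.succAbove p.succAbove = Lsub.submatrix p.succAbove p.succAbove := by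
    ext x y
    have hne : ∀ z : Fin n, j.succAbove (p.succAbove z) ≠ i := fun z h =>
      Fin.succAbove_ne p z ((hiff _).mp h)
    simp [hL', hLsub, addRowCol, hne x, hne y]
  calc e = (L'.submatrix p.succAbove p.succAbove).det := by rw [hfinal]
    _ = (L'.submatrix (Fin.succAbove 0) (Fin.succAbove 0)).det :=
        diag_minor_eq L' hsum_row hsum_col p 0
    _ = leadCofactor L' := rfl
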